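/- arXiv:1704.01998 — 2 statements merged into one kernel-verified Lean document; each statement's English description precedes it below -/
import Mathlib

section
/- Let S ⊆ {1,…,n}, θ ∈ ℝ, and let ⟨1_θ| be the conjugate-transpose of |1_θ⟩ = (1/√2)(e^{−iθ}|+⟩ − e^{iθ}|−⟩). Then, as linear maps on ℂ^(2^n): Z_S ∘ (I_{2^n} ⊗ ⟨1_θ|) ∘ CZ_S ∘ (I_{2^n} ⊗ |+⟩) = (1/√2) · exp(i·θ·Z_S). That is, with measurement outcome 1 the circuit of Figure 1 implements exp(iθ Z_S) up to normalization 1/√2 after applying the Pauli-Z correction Z_S to the unmeasured qubits (Lemma 1, outcome-1 branch). -/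
open Matrix Complex

noncomputable section

/-- The single-qubit Pauli-Z matrix `diag(1, -1)`. -/
def qZ : Matrix (ZMod 2) (ZMod 2) ℂ :=
  Matrix.diagonal (fun b => if b = 0 then 1 else -1)

/-- The single-qubit Pauli-X matrix `[[0,1],[1,0]]`. -/
def qX : Matrix (ZMod 2) (ZMod 2) ℂ :=
  Matrix.of fun b c => if b = c then 0 else 1

/-- The single-qubit Hadamard matrix `(1/√2)·[[1,1],[1,-1]]`. -/
def qH : Matrix (ZMod 2) (ZMod 2) ℂ :=
  Matrix.of fun b c => ((Real.sqrt 2 : ℂ))⁻¹ * (-1) ^ (b.val * c.val)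

/-- Kronecker product over `j : Fin n` of single-qubit matrices, as a matrix
on the `n`-qubit space indexed by bitstrings `Fin n → ZMod 2`. -/
def kron {n : ℕ} (M : Fin n → Matrix (ZMod 2) (ZMod 2) ℂ) :
    Matrix (Fin n → ZMod 2) (Fin n → ZMod 2) ℂ :=
  Matrix.of fun p q => ∏ j, M j (p j) (q j)

/-- `Z_S`: Pauli-Z on every qubit in `S`, identity elsewhere. -/
def ZS {n : ℕ} (S : Finset (Fin n)) : Matrix (Fin n → ZMod 2) (Fin n → ZMod 2) ℂ :=
  kron (fun j => if j ∈ S then qZ else 1)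

/-- `X_S`: Pauli-X on every qubit in `S`, identity elsewhere. -/
def XS {n : ℕ} (S : Finset (Fin n)) : Matrix (Fin n → ZMod 2) (Fin n → ZMod 2) ℂ :=
  kron (fun j => if j ∈ S then qX else 1)

/-- `H^{⊗n}`, the `n`-fold Kronecker power of the Hadamard matrix. -/
def HN (n : ℕ) : Matrix (Fin n → ZMod 2) (Fin n → ZMod 2) ℂ :=
  kron (fun _ => qH)

/-- The computational basis state `|p⟩`. -/
def ket {n : ℕ} (p : Fin n → ZMod 2) : (Fin n → ZMod 2) → ℂ :=
  Pi.single p 1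

/-- The parity `π_S(p) = ∑_{j ∈ S} p_j (mod 2)`. -/
def parity {n : ℕ} (S : Finset (Fin n)) (p : Fin n → ZMod 2) : ZMod 2 :=
  ∑ j ∈ S, p j
/-- The single-qubit computational basis state `|b⟩`. -/
def ketb (b : ZMod 2) : ZMod 2 → ℂ := Pi.single b 1

/-- The single-qubit state `|+⟩ = (|0⟩ + |1⟩)/√2`. -/
def bplus : ZMod 2 → ℂ :=
  ((Real.sqrt 2 : ℂ))⁻¹ • (ketb 0 + ketb 1)

/-- The single-qubit state `|−⟩ = (|0⟩ − |1⟩)/√2`. -/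
def bminus : ZMod 2 → ℂ :=
  ((Real.sqrt 2 : ℂ))⁻¹ • (ketb 0 - ketb 1)

/-- Tensor product of an `n`-qubit vector with a single-qubit (ancilla) vector. -/
def tensV {n : ℕ} (v : (Fin n → ZMod 2) → ℂ) (w : ZMod 2 → ℂ) :
    (Fin n → ZMod 2) × ZMod 2 → ℂ :=
  fun x => v x.1 * w x.2

/-- `CZ_S`: the product over `j ∈ S` of controlled-Z gates between qubit `j`
and the `(n+1)`-st (ancilla) qubit. -/
def CZS {n : ℕ} (S : Finset (Fin n)) :
    Matrix ((Fin n → ZMod 2) × ZMod 2) ((Fin n → ZMod 2) × ZMod 2) ℂ :=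
  Matrix.diagonal (fun x => ∏ j ∈ S, (-1 : ℂ) ^ ((x.1 j).val * x.2.val))

/-- The θ-basis state `|s_θ⟩ = (1/√2)(e^{−iθ}|+⟩ + (−1)^s e^{iθ}|−⟩)`. -/
def ketθ (s : ZMod 2) (θ : ℝ) : ZMod 2 → ℂ :=
  ((Real.sqrt 2 : ℂ))⁻¹ •
    (Complex.exp (-(Complex.I * θ)) • bplus +
      ((-1 : ℂ) ^ s.val * Complex.exp (Complex.I * θ)) • bminus)

/-- The map `v ↦ v ⊗ |+⟩` adjoining an ancilla in state `|+⟩`, as a matrix. -/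
def injPlus (n : ℕ) : Matrix ((Fin n → ZMod 2) × ZMod 2) (Fin n → ZMod 2) ℂ :=
  Matrix.of fun x q => (if x.1 = q then 1 else 0) * bplus x.2

/-- The contraction of the ancilla with the bra `⟨s_θ|`, as a matrix. -/
def projθ (n : ℕ) (s : ZMod 2) (θ : ℝ) :
    Matrix (Fin n → ZMod 2) ((Fin n → ZMod 2) × ZMod 2) ℂ :=
  Matrix.of fun q x => (if q = x.1 then 1 else 0) * (starRingEnd ℂ) (ketθ s θ x.2)

lemma sqrt2_sq : ((Real.sqrt 2 : ℂ))⁻¹ * ((Real.sqrt 2 : ℂ))⁻¹ = (2:ℂ)⁻¹ := by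
  rw [← mul_inv, ← Complex.ofReal_mul, Real.mul_self_sqrt (by norm_num)]
  norm_num

lemma sum_zmod2 (f : ZMod 2 → ℂ) : ∑ b, f b = f 0 + f 1 := by
  have h : (Finset.univ : Finset (ZMod 2)) = {0, 1} := by decide
  rw [h, Finset.sum_insert (by decide), Finset.sum_singleton]

lemma bplus_apply (b : ZMod 2) : bplus b = ((Real.sqrt 2 : ℂ))⁻¹ := by
  rcases (show b = 0 ∨ b = 1 by revert b; decide) with h | h <;> subst h <;>
    simp [bplus, ketb, Pi.single_apply]

lemma zmod2_cases (b : ZMod 2) : b = 0 ∨ b = 1 := by revert b; decide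

lemma bminus_apply (b : ZMod 2) : bminus b = ((Real.sqrt 2 : ℂ))⁻¹ * (-1)^b.val := by
  rcases zmod2_cases b with h | h <;> subst h <;>
    simp [bminus, ketb, Pi.single_apply, ZMod.val_one]

lemma ketθ_apply (θ : ℝ) (b : ZMod 2) :
    ketθ 1 θ b = (2:ℂ)⁻¹ *
      (Complex.exp (-(Complex.I * θ)) - (-1:ℂ)^b.val * Complex.exp (Complex.I * θ)) := by
  have h1 : ((1 : ZMod 2)).val = 1 := rfl
  simp only [ketθ, Pi.smul_apply, Pi.add_apply, bplus_apply, bminus_apply, h1, pow_one,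
    smul_eq_mul]
  rw [← sqrt2_sq]
  ring

lemma conj_ketθ (θ : ℝ) (b : ZMod 2) :
    (starRingEnd ℂ) (ketθ 1 θ b) = (2:ℂ)⁻¹ *
      (Complex.exp (Complex.I * θ) - (-1:ℂ)^b.val * Complex.exp (-(Complex.I * θ))) := by
  rw [ketθ_apply]
  have h : ∀ z : ℂ, (starRingEnd ℂ) (Complex.exp z) = Complex.exp ((starRingEnd ℂ) z) :=
    fun z => (Complex.exp_conj z).symm
  have hm1 : (starRingEnd ℂ) (-1) = -1 := by simp
  have hn : (starRingEnd ℂ) (-(Complex.I * (θ:ℂ))) = Complex.I * θ := by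
    simp [Complex.conj_I]
  simp only [_root_.map_mul, map_sub, map_inv₀, map_pow, hm1, hn, h,
    Complex.conj_I, Complex.conj_ofReal, map_ofNat]
  ring_nf

lemma ZS_eq_diagonal {n : ℕ} (S : Finset (Fin n)) :
    ZS S = Matrix.diagonal (fun p => ∏ j ∈ S, (-1:ℂ)^(p j).val) := by
  ext p q
  by_cases h : p = q
  · subst h
    rw [Matrix.diagonal_apply_eq]
    show (∏ j, (if j ∈ S then qZ else 1) (p j) (p j)) = _
    rw [← Fintype.prod_ite_mem S (fun j => (-1:ℂ)^(p j).val)]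
    refine Finset.prod_congr rfl fun j _ => ?_
    by_cases hj : j ∈ S
    · simp only [hj, if_true, qZ, Matrix.diagonal_apply_eq]
      rcases zmod2_cases (p j) with h0 | h0 <;> rw [h0] <;>
        simp [ZMod.val_one]
    · simp [hj, Matrix.one_apply_eq]
  · rw [Matrix.diagonal_apply_ne _ h]
    obtain ⟨j, hj⟩ := Function.ne_iff.mp h
    show (∏ j, (if j ∈ S then qZ else 1) (p j) (q j)) = 0
    refine Finset.prod_eq_zero (Finset.mem_univ j) ?_
    by_cases hjS : j ∈ S
    · simp [hjS, qZ, Matrix.diagonal_apply_ne _ hj]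
    · simp [hjS, Matrix.one_apply_ne hj]

lemma mid_apply {n : ℕ} (S : Finset (Fin n)) (θ : ℝ) (p q : Fin n → ZMod 2) :
    (projθ n 1 θ * CZS S * injPlus n) p q
      = if p = q then
          ((starRingEnd ℂ) (ketθ 1 θ 0)
            + (starRingEnd ℂ) (ketθ 1 θ 1) * ∏ j ∈ S, (-1:ℂ)^(p j).val)
            * ((Real.sqrt 2 : ℂ))⁻¹
        else 0 := by
  by_cases h : p = q
  · subst h
    rw [if_pos rfl, Matrix.mul_apply, Fintype.sum_prod_type]
    rw [Finset.sum_eq_single p ?_ (by simp)]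
    · simp only [Matrix.mul_diagonal, projθ, injPlus, CZS, Matrix.of_apply, if_pos rfl,
        one_mul, mul_one]
      rw [sum_zmod2]
      simp only [ZMod.val_zero, ZMod.val_one, mul_zero, mul_one, pow_zero,
        Finset.prod_const_one]
      rw [bplus_apply, bplus_apply]
      simp only [if_pos trivial, one_pow]
      ring_nf
    · intro a _ ha
      refine Finset.sum_eq_zero fun b _ => ?_
      simp [Matrix.mul_diagonal, projθ, injPlus, CZS, Matrix.of_apply, Ne.symm ha, ha]
  · rw [if_neg h, Matrix.mul_apply]
    refine Finset.sum_eq_zero fun x _ => ?_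
    simp only [Matrix.mul_diagonal, projθ, injPlus, CZS, Matrix.of_apply]
    by_cases h1 : p = x.1
    · rw [if_neg (fun hq => h (h1.trans hq))]
      ring_nf
    · rw [if_neg h1]; ring


/-- The circuit of Figure 1 with ancilla measurement outcome `1`, followed by the
Pauli-Z correction `Z_S`, implements `exp(iθ Z_S)` up to normalization `1/√2`. -/
theorem stmt_8 (n : ℕ) (S : Finset (Fin n)) (θ : ℝ) :
    ZS S * (projθ n 1 θ * CZS S * injPlus n)
      = ((Real.sqrt 2 : ℂ))⁻¹ • NormedSpace.exp ((Complex.I * (θ : ℂ)) • ZS S) := by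
  rw [ZS_eq_diagonal]
  have hsmul : (Complex.I * (θ:ℂ)) •
        Matrix.diagonal (fun p : Fin n → ZMod 2 => ∏ j ∈ S, (-1:ℂ)^(p j).val)
      = Matrix.diagonal
          (fun p : Fin n → ZMod 2 => Complex.I * θ * ∏ j ∈ S, (-1:ℂ)^(p j).val) := by
    rw [← Matrix.diagonal_smul]
    congr 1
  rw [hsmul, Matrix.exp_diagonal, Pi.exp_def, ← Complex.exp_eq_exp_ℂ]
  ext p q
  rw [Matrix.mul_apply]
  simp only [Matrix.diagonal_apply, Matrix.smul_apply, smul_eq_mul]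
  rw [Finset.sum_eq_single p (by intro a _ ha; simp [Ne.symm ha]) (by simp), if_pos rfl]
  rw [mid_apply]
  by_cases h : p = q
  · subst h
    rw [if_pos rfl, if_pos rfl, conj_ketθ, conj_ketθ]
    simp only [ZMod.val_zero, ZMod.val_one, pow_zero, pow_one, one_mul]
    rw [Finset.prod_pow_eq_pow_sum]
    rcases Nat.even_or_odd (∑ j ∈ S, (p j).val) with he | ho
    · rw [he.neg_one_pow, mul_one]
      ring_nf
    · rw [ho.neg_one_pow]
      have h2 : Complex.I * (θ:ℂ) * (-1) = -(Complex.I * θ) := by ring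
      rw [h2]
      ring_nf
  · rw [if_neg h, if_neg h, mul_zero, mul_zero]
end
end

section
/- Let Q ∈ {0,1}^{n_a × n_p}, S_i = { j : Q_{ij} = 1 }, θ ∈ ℝ, and s ∈ {0,1}^{n_a}. Define c_j(s) = ⊕_{i : Q_{ij}=1} s_i ∈ {0,1} for j = 1,…,n_p. Then, as linear maps on ℂ^(2^{n_p}): (I_{2^{n_p}} ⊗ ⟨(s_1)_θ| ⊗ ⋯ ⊗ ⟨(s_{n_a})_θ|) ∘ E_Q ∘ (I_{2^{n_p}} ⊗ |+⟩^{⊗n_a}) = 2^{−n_a/2} · (Π_{j=1}^{n_p} Z_j^{c_j(s)}) · Π_{i=1}^{n_a} exp(i·θ·Z_{S_i}). That is, entangling n_a ancillas in |+⟩ according to Q and projecting each ancilla i onto ⟨(s_i)_θ| implements, up to normalization 2^{−n_a/2} and the outcome-dependent Pauli-Z correction determined by c(s), the product of all X-program term unitaries. -/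
open Matrix Complex

noncomputable section

/-- `E_Q`: the product over all `(i,j)` with `Q_{ij} = 1` of controlled-Z gates
between primary qubit `j` and ancilla qubit `i`; it is diagonal with entry
`(−1)^{Σ_{i,j} Q_{ij} p_j a_i}` on the basis state `|p⟩ ⊗ |a⟩`. -/
def EQ {n_a n_p : ℕ} (Q : Matrix (Fin n_a) (Fin n_p) (ZMod 2)) :
    Matrix ((Fin n_p → ZMod 2) × (Fin n_a → ZMod 2))
      ((Fin n_p → ZMod 2) × (Fin n_a → ZMod 2)) ℂ :=
  Matrix.diagonal (fun x =>
    (-1 : ℂ) ^ (∑ i, ∑ j, (Q i j).val * (x.1 j).val * (x.2 i).val))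

/-- The map `v ↦ v ⊗ |+⟩^{⊗ n_a}` adjoining `n_a` ancillas in `|+⟩`, as a matrix. -/
def injPlusN (n_a n_p : ℕ) :
    Matrix ((Fin n_p → ZMod 2) × (Fin n_a → ZMod 2)) (Fin n_p → ZMod 2) ℂ :=
  Matrix.of fun x q => (if x.1 = q then 1 else 0) * ∏ i, bplus (x.2 i)

/-- Contraction of the `n_a` ancillas with the bras `⟨(s_i)_θ|`, as a matrix. -/
def projθN (n_a n_p : ℕ) (s : Fin n_a → ZMod 2) (θ : ℝ) :
    Matrix (Fin n_p → ZMod 2) ((Fin n_p → ZMod 2) × (Fin n_a → ZMod 2)) ℂ :=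
  Matrix.of fun q x =>
    (if q = x.1 then 1 else 0) * ∏ i, (starRingEnd ℂ) (ketθ (s i) θ (x.2 i))

section Helpers

lemma zmod2_cases_s9 : ∀ a : ZMod 2, a = 0 ∨ a = 1 := by decide

/-- The character `t ↦ (-1)^t` on `ZMod 2`. -/
def chi (t : ZMod 2) : ℂ := (-1) ^ t.val

lemma neg_one_pow_mod (n : ℕ) : (-1 : ℂ) ^ (n % 2) = (-1 : ℂ) ^ n := by
  conv_rhs => rw [← Nat.div_add_mod n 2]
  rw [pow_add, pow_mul]
  norm_num

lemma chi_add (a b : ZMod 2) : chi (a + b) = chi a * chi b := by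
  rw [chi, ZMod.val_add, neg_one_pow_mod, pow_add, chi, chi]

lemma chi_natCast (n : ℕ) : chi (n : ZMod 2) = (-1 : ℂ) ^ n := by
  rw [chi, ZMod.val_natCast, neg_one_pow_mod]

lemma chi_sum {ι : Type*} (t : Finset ι) (f : ι → ZMod 2) :
    chi (∑ i ∈ t, f i) = ∏ i ∈ t, chi (f i) := by
  induction t using Finset.cons_induction with
  | empty => simp [chi]
  | cons a t ha ih => rw [Finset.sum_cons, Finset.prod_cons, chi_add, ih]

lemma chi_pow_val (a b : ZMod 2) : chi a ^ b.val = chi (a * b) := by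
  rw [chi, chi, ZMod.val_mul, neg_one_pow_mod, pow_mul]

lemma kron_diagonal {n : ℕ} (d : Fin n → ZMod 2 → ℂ) :
    kron (fun j => Matrix.diagonal (d j)) = Matrix.diagonal (fun p => ∏ j, d j (p j)) := by
  ext p q
  by_cases h : p = q
  · subst h
    simp [kron, Matrix.diagonal_apply_eq]
  · rw [Matrix.diagonal_apply_ne _ h]
    obtain ⟨j, hj⟩ := Function.ne_iff.mp h
    exact Finset.prod_eq_zero (Finset.mem_univ j) (Matrix.diagonal_apply_ne _ hj)

lemma qZ_eq : qZ = Matrix.diagonal chi := by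
  have h : (fun b => if b = (0 : ZMod 2) then (1 : ℂ) else -1) = chi := by
    funext b
    rcases zmod2_cases_s9 b with hb | hb <;> subst hb <;> simp [chi, ZMod.val_one]
  rw [qZ, h]

lemma listprod_diag {I : Type*} [Fintype I] [DecidableEq I] {n : ℕ} (D : Fin n → I → ℂ) :
    (List.ofFn (fun i => Matrix.diagonal (D i))).prod
      = Matrix.diagonal (fun p => ∏ i, D i p) := by
  induction n with
  | zero => simp [Matrix.diagonal_one]
  | succ n ih =>
    rw [List.ofFn_succ, List.prod_cons, ih, Matrix.diagonal_mul_diagonal]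
    refine congrArg Matrix.diagonal (funext fun p => ?_)
    rw [Fin.prod_univ_succ]

lemma ZS_diag {n : ℕ} (S : Finset (Fin n)) :
    ZS S = Matrix.diagonal (fun p => chi (parity S p)) := by
  unfold ZS
  have h : (fun j => if j ∈ S then qZ else (1 : Matrix (ZMod 2) (ZMod 2) ℂ))
      = fun j => Matrix.diagonal (fun b => if j ∈ S then chi b else 1) := by
    funext j
    by_cases hj : j ∈ S <;> simp [hj, qZ_eq, Matrix.diagonal_one]
  rw [h, kron_diagonal]
  refine congrArg Matrix.diagonal (funext fun p => ?_)
  rw [Finset.prod_ite_mem, Finset.univ_inter, parity, chi_sum]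

lemma exp_ZS {n : ℕ} (S : Finset (Fin n)) (θ : ℝ) :
    NormedSpace.exp ((Complex.I * (θ : ℂ)) • ZS S)
      = Matrix.diagonal (fun p => Complex.exp (Complex.I * θ * chi (parity S p))) := by
  rw [ZS_diag, ← Matrix.diagonal_smul, Matrix.exp_diagonal]
  refine congrArg Matrix.diagonal (funext fun p => ?_)
  rw [Pi.coe_exp, Pi.smul_apply, smul_eq_mul, ← Complex.exp_eq_exp_ℂ]

lemma key (s t : ZMod 2) (θ : ℝ) :
    ∑ b : ZMod 2, (starRingEnd ℂ) (ketθ s θ b) * chi t ^ b.val * bplus b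
      = (Real.sqrt 2 : ℂ)⁻¹ * (chi (s * t) * Complex.exp (Complex.I * θ * chi t)) := by
  have h0 : ((Real.sqrt 2 : ℝ) : ℂ) ≠ 0 := by
    norm_cast
    positivity
  have h2 : ((Real.sqrt 2 : ℝ) : ℂ) * ((Real.sqrt 2 : ℝ) : ℂ) = 2 := by
    norm_cast
    exact Real.mul_self_sqrt (by norm_num)
  have hc1 : (starRingEnd ℂ) (Complex.exp (-(Complex.I * θ))) = Complex.exp (Complex.I * θ) := by
    rw [← Complex.exp_conj]
    congr 1
    simp [Complex.conj_ofReal]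
  have hc2 : (starRingEnd ℂ) (Complex.exp (Complex.I * θ)) = Complex.exp (-(Complex.I * θ)) := by
    rw [← Complex.exp_conj]
    congr 1
    simp [Complex.conj_ofReal]
  have hcs : (starRingEnd ℂ) (((Real.sqrt 2 : ℝ) : ℂ))⁻¹ = (((Real.sqrt 2 : ℝ) : ℂ))⁻¹ := by
    rw [map_inv₀, Complex.conj_ofReal]
  rcases zmod2_cases_s9 s with hs | hs <;> rcases zmod2_cases_s9 t with ht | ht <;>
      subst hs <;> subst ht <;>
    · simp only [sum_zmod2, ketθ, bplus, bminus, ketb, chi, Pi.smul_apply, Pi.add_apply,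
        Pi.sub_apply, Pi.single_eq_same, Pi.single_eq_of_ne (by decide : (1 : ZMod 2) ≠ 0),
        Pi.single_eq_of_ne (by decide : (0 : ZMod 2) ≠ 1), smul_eq_mul, _root_.map_mul,
        _root_.map_add, map_sub, _root_.map_one, _root_.map_zero, map_pow, map_neg,
        hc1, hc2, hcs, ZMod.val_zero, ZMod.val_one, ZMod.val_mul]
      field_simp
      ring_nf
      first
      | linear_combination (-(Complex.exp (Complex.I * (θ:ℂ))) * ((Real.sqrt 2 : ℝ) : ℂ)) * h2
      | linear_combination (-(Complex.exp (-(Complex.I * (θ:ℂ)))) * ((Real.sqrt 2 : ℝ) : ℂ)) * h2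
      | linear_combination (Complex.exp (-(Complex.I * (θ:ℂ))) * ((Real.sqrt 2 : ℝ) : ℂ)) * h2
      | (have h3 : ((Real.sqrt 2 : ℝ) : ℂ) ^ 2 = 2 := by rw [sq]; exact h2
         have h4 : ((Real.sqrt 2 : ℝ) : ℂ) ^ 3 = 2 * ((Real.sqrt 2 : ℝ) : ℂ) := by
           rw [pow_succ, h3]
         simp only [h3, h4])

end Helpers

/-- Entangling `n_a` ancillas in `|+⟩` according to `Q` and projecting ancilla `i`
onto `⟨(s_i)_θ|` implements, up to normalization `2^{−n_a/2}` and the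
outcome-dependent Pauli-Z correction `∏_j Z_j^{c_j(s)}`, the product of all
X-program term unitaries `∏_i exp(iθ Z_{S_i})`. -/
theorem stmt_9 (n_a n_p : ℕ) (Q : Matrix (Fin n_a) (Fin n_p) (ZMod 2)) (θ : ℝ)
    (S : Fin n_a → Finset (Fin n_p)) (hS : ∀ i j, j ∈ S i ↔ Q i j = 1)
    (s : Fin n_a → ZMod 2) (c : Fin n_p → ZMod 2)
    (hc : ∀ j, c j = ∑ i, Q i j * s i) :
    projθN n_a n_p s θ * EQ Q * injPlusN n_a n_p
      = (((Real.sqrt 2 : ℂ))⁻¹ ^ n_a) •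
          (kron (fun j => qZ ^ (c j).val) *
            (List.ofFn
              (fun i => NormedSpace.exp ((Complex.I * (θ : ℂ)) • ZS (S i)))).prod) := by
  have hQ : ∀ i j, Q i j = if j ∈ S i then 1 else 0 := by
    intro i j
    by_cases h : j ∈ S i
    · simp [h, (hS i j).mp h]
    · simp only [h, if_false]
      rcases zmod2_cases_s9 (Q i j) with h0 | h1
      · exact h0
      · exact absurd ((hS i j).mpr h1) h
  have hpar : ∀ (i : Fin n_a) (p : Fin n_p → ZMod 2),
      parity (S i) p = ∑ j, Q i j * p j := by
    intro i p
    calc parity (S i) p = ∑ j, if j ∈ S i then p j else 0 := by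
          rw [parity, Finset.sum_ite_mem, Finset.univ_inter]
      _ = ∑ j, Q i j * p j := by
          refine Finset.sum_congr rfl fun j _ => ?_
          rw [hQ i j]
          by_cases h : j ∈ S i <;> simp [h]
  have hcast : ∀ (i : Fin n_a) (q : Fin n_p → ZMod 2),
      ((∑ j, (Q i j).val * (q j).val : ℕ) : ZMod 2) = parity (S i) q := by
    intro i q
    rw [hpar]
    push_cast
    simp [ZMod.natCast_val, ZMod.cast_id]
  -- the left-hand side
  have hLHS : projθN n_a n_p s θ * EQ Q * injPlusN n_a n_p
      = Matrix.diagonal (fun p => ∏ i,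
          ((Real.sqrt 2 : ℂ)⁻¹ * (chi (s i * parity (S i) p)
            * Complex.exp (Complex.I * θ * chi (parity (S i) p))))) := by
    ext q p
    rw [Matrix.mul_apply]
    simp only [EQ, Matrix.mul_diagonal, projθN, injPlusN, Matrix.of_apply]
    rw [Fintype.sum_prod_type]
    simp only [ite_mul, one_mul, zero_mul, Finset.sum_ite_irrel, Finset.sum_const_zero,
      Finset.sum_ite_eq, Finset.mem_univ, if_true]
    by_cases hqp : q = p
    · subst hqp
      rw [Matrix.diagonal_apply_eq]
      simp only [if_true, mul_ite, mul_one, mul_zero, ite_self, if_pos rfl]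
      calc ∑ a : Fin n_a → ZMod 2,
            ((∏ i, (starRingEnd ℂ) (ketθ (s i) θ (a i))) *
              (-1 : ℂ) ^ ∑ i, ∑ j, (Q i j).val * (q j).val * (a i).val) *
              ∏ i, bplus (a i)
          = ∑ a : Fin n_a → ZMod 2, ∏ i,
              ((starRingEnd ℂ) (ketθ (s i) θ (a i))
                * chi ((∑ j, (Q i j).val * (q j).val : ℕ)) ^ (a i).val * bplus (a i)) := by
            refine Finset.sum_congr rfl fun a _ => ?_
            simp only [← Finset.sum_mul]
            rw [← Finset.prod_pow_eq_pow_sum]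
            simp only [pow_mul, ← chi_natCast]
            rw [← Finset.prod_mul_distrib, ← Finset.prod_mul_distrib]
        _ = ∏ i, ∑ b : ZMod 2,
              ((starRingEnd ℂ) (ketθ (s i) θ b)
                * chi ((∑ j, (Q i j).val * (q j).val : ℕ)) ^ b.val * bplus b) := by
            rw [← Fintype.prod_sum (fun i (b : ZMod 2) =>
              (starRingEnd ℂ) (ketθ (s i) θ b)
                * chi ((∑ j, (Q i j).val * (q j).val : ℕ)) ^ b.val * bplus b)]
        _ = ∏ i, ((Real.sqrt 2 : ℂ)⁻¹ * (chi (s i * parity (S i) q)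
              * Complex.exp (Complex.I * θ * chi (parity (S i) q)))) := by
            refine Finset.prod_congr rfl fun i _ => ?_
            rw [hcast i q, key]
    · rw [Matrix.diagonal_apply_ne _ hqp]
      simp [hqp]
  rw [hLHS]
  have hqZ : (fun j => qZ ^ (c j).val)
      = fun j => Matrix.diagonal (fun b => chi b ^ (c j).val) := by
    funext j
    rw [qZ_eq, Matrix.diagonal_pow]
    rfl
  have hexp : (fun i => NormedSpace.exp ((Complex.I * (θ : ℂ)) • ZS (S i)))
      = fun i => Matrix.diagonal
          (fun p => Complex.exp (Complex.I * θ * chi (parity (S i) p))) := by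
    funext i
    exact exp_ZS (S i) θ
  rw [hqZ, kron_diagonal, hexp, listprod_diag, Matrix.diagonal_mul_diagonal,
    ← Matrix.diagonal_smul]
  refine congrArg Matrix.diagonal (funext fun p => ?_)
  rw [Finset.prod_mul_distrib, Finset.prod_mul_distrib, Finset.prod_const,
    Finset.card_univ, Fintype.card_fin]
  simp only [chi_pow_val]
  simp only [← chi_sum]
  have hkey : ∑ i, s i * parity (S i) p = ∑ j, p j * c j := by
    calc ∑ i, s i * parity (S i) p = ∑ i, ∑ j, s i * (Q i j * p j) := by
          refine Finset.sum_congr rfl fun i _ => ?_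
          rw [hpar, Finset.mul_sum]
      _ = ∑ j, ∑ i, s i * (Q i j * p j) := Finset.sum_comm
      _ = ∑ j, p j * c j := by
          refine Finset.sum_congr rfl fun j _ => ?_
          rw [hc j, Finset.mul_sum]
          refine Finset.sum_congr rfl fun i _ => ?_
          ring
  rw [hkey, Pi.smul_apply, smul_eq_mul]
end
end
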